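/- For every integer n ≥ 1 and every x in the open interval (-1, 1), the normalized Legendre polynomial satisfies |P̃_n(x)| < sqrt(2/π) · (1 - x²)^(-1/4), where P̃_n(x) = sqrt((2n+1)/2) · P_n(x) and P_n is the degree-n Legendre polynomial. -/

import Mathlib

open Polynomial Real

/-- The classical Legendre polynomial of degree `n`, via Rodrigues' formula. -/
noncomputable def legendreP (n : ℕ) : Polynomial ℝ :=
  Polynomial.C (1 / (2 ^ n * (n.factorial : ℝ))) *
    (Polynomial.derivative^[n] ((Polynomial.X ^ 2 - 1) ^ n))

/-- The `L²`-normalized Legendre polynomial. -/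
noncomputable def legendreTilde (n : ℕ) (x : ℝ) : ℝ :=
  Real.sqrt ((2 * n + 1) / 2) * (legendreP n).eval x

open Filter Topology Set


lemma iter_deriv_X_mul (k : ℕ) (g : ℝ[X]) :
    derivative^[k+1] (X * g) = X * derivative^[k+1] g + C ((k:ℝ)+1) * derivative^[k] g := by
  induction k with
  | zero => simp [derivative_mul]; ring
  | succ k ih =>
    have e1 : derivative^[k+1] g = derivative (derivative^[k] g) :=
      Function.iterate_succ_apply' _ _ _
    have e2 : derivative^[k+2] g = derivative (derivative (derivative^[k] g)) := by
      rw [show k+2 = (k+1)+1 from rfl, Function.iterate_succ_apply', e1]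
    rw [show k+1+1 = (k+1)+1 from rfl, Function.iterate_succ_apply', ih, e1, e2]
    set h := derivative^[k] g
    simp only [derivative_add, derivative_mul, derivative_X, derivative_C, derivative_one,
      map_add, map_one, map_mul, map_ofNat, zero_mul, mul_zero, Nat.cast_add, Nat.cast_one]
    ring

lemma iter_deriv_X2_mul (k : ℕ) (g : ℝ[X]) :
    derivative^[k+2] ((X^2 - 1) * g) = (X^2-1) * derivative^[k+2] g
      + C (2*((k:ℝ)+2)) * (X * derivative^[k+1] g)
      + C (((k:ℝ)+2)*((k:ℝ)+1)) * derivative^[k] g := by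
  induction k with
  | zero =>
    show derivative (derivative _) = _
    simp only [derivative_mul, derivative_sub, derivative_one, derivative_X_pow, derivative_add,
      derivative_C, derivative_X, derivative_zero, derivative_ofNat, zero_mul, mul_zero, sub_zero, zero_sub,
      map_add, map_one, map_mul, map_ofNat, Nat.cast_ofNat, Nat.cast_zero]
    norm_num
    ring
  | succ k ih =>
    have e1 : derivative^[k+1] g = derivative (derivative^[k] g) :=
      Function.iterate_succ_apply' _ _ _
    have e2 : derivative^[k+2] g = derivative (derivative (derivative^[k] g)) := by
      rw [show k+2 = (k+1)+1 from rfl, Function.iterate_succ_apply', e1]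
    have e3 : derivative^[k+3] g = derivative (derivative (derivative (derivative^[k] g))) := by
      rw [show k+3 = (k+2)+1 from rfl, Function.iterate_succ_apply', e2]
    rw [show k+1+2 = (k+2)+1 from rfl, Function.iterate_succ_apply', ih,
      show k+2+1 = k+3 from rfl, show k+1+1 = k+2 from rfl, e1, e2, e3]
    set h := derivative^[k] g
    simp only [derivative_add, derivative_mul, derivative_sub, derivative_one, derivative_X_pow,
      derivative_X, derivative_C, map_add, map_one, map_mul, map_ofNat, Nat.cast_ofNat,
      derivative_zero, derivative_ofNat, zero_mul, mul_zero, sub_zero, zero_sub, Nat.cast_add, Nat.cast_one]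
    push_cast
    ring

lemma legendre_ode (n : ℕ) (hn : 1 ≤ n) :
    (X^2-1) * derivative (derivative (legendreP n)) + C 2 * (X * derivative (legendreP n))
      = C ((n:ℝ)*((n:ℝ)+1)) * legendreP n := by
  set w : ℝ[X] := (X^2-1)^n with hw
  have base : (X^2-1) * derivative w = C (2*(n:ℝ)) * (X * w) := by
    rw [hw, derivative_pow]
    have : derivative (X^2 - 1 : ℝ[X]) = C 2 * X := by
      simp [derivative_sub, derivative_X_pow]
      rw [map_ofNat C 2]; norm_num
    rw [this]
    have hpow : (X^2-1 : ℝ[X]) * (X^2-1)^(n-1) = (X^2-1)^n := by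
      rw [← pow_succ']
      congr 1
      omega
    push_cast
    calc (X^2-1) * (C (n:ℝ) * (X^2-1)^(n-1) * (C 2 * X))
        = (C 2 * C (n:ℝ)) * X * ((X^2-1) * (X^2-1)^(n-1)) := by ring
      _ = C (2*(n:ℝ)) * (X * w) := by rw [hpow, ← hw, ← C_mul]; ring
  -- apply derivative^[n+1]
  have main := congrArg (derivative^[n+1]) base
  obtain ⟨k, rfl⟩ : ∃ k, n = k + 1 := ⟨n - 1, by omega⟩
  rw [show k+1+1 = k+2 from rfl] at main
  rw [iter_deriv_X2_mul k (derivative w)] at main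
  push_cast at main
  rw [iterate_derivative_C_mul] at main
  rw [show (k+2 : ℕ) = (k+1)+1 from rfl, iter_deriv_X_mul (k+1) w] at main
  have ed : ∀ j : ℕ, derivative^[j] (derivative w) = derivative^[j+1] w := by
    intro j; rw [Function.iterate_succ_apply]
  rw [ed, ed, ed] at main
  -- main : (X^2-1) * D^[k+3] w + C(2(k+2)) * (X * D^[k+2] w) + C((k+2)(k+1)) * D^[k+1] w
  --      = C(2(k+1)) * (X * D^[k+2] w + C(k+2) * D^[k+1] w)
  set L0 := derivative^[k+1] w with hL0
  have e2 : derivative^[k+1+1] w = derivative L0 := Function.iterate_succ_apply' _ _ _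
  have e3 : derivative^[k+2+1] w = derivative (derivative L0) := by
    rw [Function.iterate_succ_apply', show (k+2:ℕ) = k+1+1 from rfl, e2]
  rw [show (k+2:ℕ)+1 = k+2+1 from rfl] at main
  rw [e3, show (k+1:ℕ)+1 = k+1+1 from rfl, e2] at main
  have hLP : legendreP (k+1) = C (1 / (2 ^ (k+1) * ((k+1).factorial : ℝ))) * L0 := rfl
  rw [hLP, derivative_C_mul, derivative_C_mul]
  simp only [map_mul, map_add, map_one, map_ofNat, Nat.cast_add, Nat.cast_one] at main ⊢
  linear_combination (C (1 / (2 ^ (k+1) * ((k+1).factorial : ℝ))) : ℝ[X]) * main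

noncomputable def cw (m : ℕ) : ℝ := ((2*m).choose m : ℝ) / 4^m

noncomputable def gfun (m : ℕ) : ℝ := (m:ℝ) + 1/4 + 1/(32*(m:ℝ)^2+48*m+20)

lemma expand_w (n : ℕ) : ((X^2-1:ℝ[X]))^n
    = ∑ m ∈ Finset.range (n+1), C ((-1:ℝ)^(n-m) * (n.choose m : ℝ)) * X^(2*m) := by
  have : ((X^2-1:ℝ[X]))^n = (X^2 + (-1))^n := by ring_nf
  rw [this, add_pow]
  refine Finset.sum_congr rfl fun m hm => ?_
  have : ((-1:ℝ[X]))^(n-m) = C ((-1:ℝ)^(n-m)) := by simp [C_neg]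
  rw [this]
  rw [show ((n.choose m : ℕ) : ℝ[X]) = C ((n.choose m : ℕ) : ℝ) by simp]
  rw [← pow_mul, mul_assoc, ← C_mul, mul_comm]

lemma coeff_w_even (n k : ℕ) (h : k ≤ n) :
    (((X^2-1:ℝ[X]))^n).coeff (2*k) = (-1:ℝ)^(n-k) * (n.choose k : ℝ) := by
  rw [expand_w, finset_sum_coeff]
  rw [Finset.sum_eq_single k]
  · rw [coeff_C_mul, coeff_X_pow, if_pos rfl, mul_one]
  · intro b _ hb
    rw [coeff_C_mul, coeff_X_pow, if_neg (by omega), mul_zero]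
  · intro hk
    exact absurd (Finset.mem_range.mpr (by omega)) hk

lemma coeff_w_odd (n k : ℕ) :
    (((X^2-1:ℝ[X]))^n).coeff (2*k+1) = 0 := by
  rw [expand_w, finset_sum_coeff]
  refine Finset.sum_eq_zero fun b _ => ?_
  rw [coeff_C_mul, coeff_X_pow, if_neg (by omega), mul_zero]

lemma coeff_legendre (n j : ℕ) :
    (legendreP n).coeff j = (1 / (2 ^ n * (n.factorial : ℝ))) *
      ((j + n).descFactorial n * (((X^2-1:ℝ[X]))^n).coeff (j + n)) := by
  rw [legendreP, coeff_C_mul, coeff_iterate_derivative]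
  simp [nsmul_eq_mul]

lemma eval0_even (m : ℕ) : (legendreP (2*m)).eval 0 = (-1:ℝ)^m * cw m := by
  rw [← coeff_zero_eq_eval_zero, coeff_legendre]
  rw [show 0 + 2*m = 2*m from by omega, coeff_w_even (2*m) m (by omega)]
  rw [Nat.descFactorial_self, show 2*m - m = m from by omega, cw]
  have h2 : ((2:ℝ))^(2*m) = 4^m := by rw [pow_mul]; norm_num
  field_simp [h2]
  ring_nf; rw [← h2]; ring

lemma eval0_odd (m : ℕ) : (legendreP (2*m+1)).eval 0 = 0 := by
  rw [← coeff_zero_eq_eval_zero, coeff_legendre]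
  rw [show 0 + (2*m+1) = 2*m+1 from by omega, coeff_w_odd]
  simp

lemma deriv0 (n : ℕ) : (derivative (legendreP n)).eval 0 = (legendreP n).coeff 1 := by
  rw [← coeff_zero_eq_eval_zero, coeff_derivative]
  simp

lemma deriv0_even (m : ℕ) : (derivative (legendreP (2*m))).eval 0 = 0 := by
  rw [deriv0, coeff_legendre, show 1 + 2*m = 2*m+1 from by omega, coeff_w_odd]
  simp

lemma deriv0_odd (m : ℕ) :
    (derivative (legendreP (2*m+1))).eval 0 = (-1:ℝ)^m * ((2*m+1) * cw m) := by
  rw [deriv0, coeff_legendre, show 1 + (2*m+1) = 2*(m+1) from by omega,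
    coeff_w_even (2*m+1) (m+1) (by omega), show 2*m+1 - (m+1) = m from by omega]
  have hdesc : ((2*(m+1)).descFactorial (2*m+1)) = (2*m+2).factorial := by
    rw [show 2*(m+1) = 2*m+2 from by omega]
    rw [show (2*m+2).factorial = (2*m+2).descFactorial (2*m+2) from (Nat.descFactorial_self _).symm]
    conv_rhs => rw [show (2*m+2) = (2*m+1)+1 from rfl, Nat.descFactorial_succ]
    have : 2*m+1+1 - (2*m+1) = 1 := by omega
    rw [this, one_mul]
  rw [hdesc]
  have hch : ((m:ℝ)+1) * ((2*m+1).choose (m+1) : ℝ) = (2*(m:ℝ)+1) * ((2*m).choose m : ℝ) := by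
    have h1 : (2*m+1) * (2*m).choose m = (2*m+1).choose (m+1) * (m+1) := by
      have := Nat.add_one_mul_choose_eq (2*m) m
      simpa using this
    have h2 := congrArg (fun x : ℕ => (x : ℝ)) h1
    push_cast at h2
    linarith
  have hfact : ((2*m+2).factorial : ℝ) = (2*m+2) * ((2*m+1).factorial : ℝ) := by
    rw [show (2*m+2) = (2*m+1)+1 from by omega, Nat.factorial_succ]
    push_cast; ring
  rw [hfact, cw]
  have h2 : ((2:ℝ))^(2*m+1) = 2 * 4^m := by rw [pow_succ, pow_mul]; norm_num; ring
  have hfpos : ((2*m+1).factorial : ℝ) ≠ 0 := by positivity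
  field_simp [h2]
  push_cast
  have h4 : (2:ℝ)^(2*m) = 4^m := by rw [pow_mul]; norm_num
  linear_combination (2*(4:ℝ)^m) * hch - (2*(2*(m:ℝ)+1)*((2*m).choose m : ℝ)) * h4


lemma cw_pos (m : ℕ) : 0 < cw m := by
  have h : 0 < (2*m).choose m := Nat.choose_pos (by omega)
  have h' : 0 < ((2*m).choose m : ℝ) := by exact_mod_cast h
  exact div_pos h' (by positivity)

lemma gfun_pos (m : ℕ) : 0 < gfun m := by
  have : (0:ℝ) ≤ (m:ℝ) := Nat.cast_nonneg m
  unfold gfun; positivity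

lemma cw_sq_wallis (m : ℕ) : (2*(m:ℝ)+1) * cw m ^ 2 * Real.Wallis.W m = 1 := by
  have hch : ((2*m).choose m * (m.factorial * m.factorial) : ℕ) = (2*m).factorial := by
    have := Nat.choose_mul_factorial_mul_factorial (show m ≤ 2*m by omega)
    rw [show 2*m - m = m from by omega] at this
    rw [← this]; ring
  have hchR : (((2*m).choose m : ℝ)) * ((m.factorial : ℝ) * (m.factorial : ℝ)) = ((2*m).factorial : ℝ) := by
    exact_mod_cast congrArg (fun x : ℕ => (x:ℝ)) hch
  rw [Real.Wallis.W_eq_factorial_ratio]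
  have h16 : ((4:ℝ))^m = 2^(2*m) := by rw [pow_mul]; norm_num
  have h2 : ((2:ℝ))^(4*m) = (2^(2*m))^2 := by rw [← pow_mul]; ring_nf
  have hfm : (0:ℝ) < (m.factorial : ℝ) := by exact_mod_cast m.factorial_pos
  have hf2m : (0:ℝ) < ((2*m).factorial : ℝ) := by exact_mod_cast (2*m).factorial_pos
  have h2m1 : (0:ℝ) < 2*(m:ℝ)+1 := by positivity
  unfold cw
  rw [div_pow, h16]
  push_cast
  field_simp
  rw [h2]
  linear_combination (((2:ℝ)^(2*m))^2 *
    (((2*m).choose m : ℝ) * ((m.factorial:ℝ) * (m.factorial:ℝ)) + ((2*m).factorial : ℝ))) * hchR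

lemma cw_sq_eq (m : ℕ) : cw m ^ 2 = 1 / ((2*(m:ℝ)+1) * Real.Wallis.W m) := by
  have h := cw_sq_wallis m
  have hW := Real.Wallis.W_pos m
  have h2m1 : (0:ℝ) < 2*(m:ℝ)+1 := by positivity
  field_simp
  linarith [h]

lemma step_ineq (m : ℕ) : (2*(m:ℝ)+2)^2 * gfun m < (2*(m:ℝ)+1)^2 * gfun (m+1) := by
  set t : ℝ := (m:ℝ) with ht
  have htn : 0 ≤ t := Nat.cast_nonneg m
  unfold gfun
  push_cast
  rw [← ht, ← sub_pos]
  have hD1 : (0:ℝ) < 32*t^2+48*t+20 := by positivity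
  have hD2 : (0:ℝ) < 32*(t+1)^2+48*(t+1)+20 := by positivity
  have hform : (2*t+1)^2 * (t+1 + 1/4 + 1/(32*(t+1)^2+48*(t+1)+20))
      - (2*t+2)^2 * (t + 1/4 + 1/(32*t^2+48*t+20))
      = (256*t^4+896*t^3+1184*t^2+640*t+120) / ((32*t^2+48*t+20)*(32*(t+1)^2+48*(t+1)+20)) := by
    field_simp
    ring
  rw [hform]
  positivity

lemma cw_recur (m : ℕ) : cw (m+1) = cw m * (2*(m:ℝ)+1) / (2*(m:ℝ)+2) := by
  have h := Nat.succ_mul_centralBinom_succ m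
  have hc : ∀ k : ℕ, Nat.centralBinom k = (2*k).choose k := fun k => rfl
  rw [hc, hc] at h
  have hR := congrArg (fun x : ℕ => (x:ℝ)) h
  push_cast at hR
  unfold cw
  have h4 : ((4:ℝ))^(m+1) = 4 * 4^m := by ring
  rw [h4]
  have hm1 : ((m:ℝ)+1) ≠ 0 := by positivity
  have h4m : ((4:ℝ))^m ≠ 0 := by positivity
  rw [show 2*(m+1) = 2*m+2 from by omega] at hR ⊢
  field_simp
  linear_combination 2 * hR

lemma a_strictmono (m : ℕ) : cw m ^2 * gfun m < cw (m+1) ^2 * gfun (m+1) := by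
  rw [cw_recur]
  have hcp := cw_pos m
  have h2m2 : (0:ℝ) < 2*(m:ℝ)+2 := by positivity
  have key := step_ineq m
  rw [div_pow, mul_pow, div_mul_eq_mul_div, lt_div_iff₀ (by positivity)]
  nlinarith [mul_lt_mul_of_pos_left key (show (0:ℝ) < cw m ^2 by positivity)]

lemma a_tendsto : Tendsto (fun m : ℕ => cw m ^2 * gfun m) atTop (𝓝 (1/π)) := by
  have hW := Real.Wallis.tendsto_W_nhds_pi_div_two
  have hWinv : Tendsto (fun m : ℕ => (Real.Wallis.W m)⁻¹) atTop (𝓝 (2/π)) := by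
    have := hW.inv₀ (by positivity : (π/2 : ℝ) ≠ 0)
    simpa [one_div, inv_div] using this
  have hg : Tendsto (fun m : ℕ => gfun m / (2*(m:ℝ)+1)) atTop (𝓝 (1/2)) := by
    have hlow : Tendsto (fun m : ℕ => 1/2 - 1/((m:ℝ)+1)) atTop (𝓝 (1/2)) := by
      have h0 := tendsto_one_div_add_atTop_nhds_zero_nat (𝕜 := ℝ)
      have h2 := (tendsto_const_nhds (x := (1/2:ℝ)) (f := atTop)).sub h0
      simpa using h2
    apply tendsto_of_tendsto_of_tendsto_of_le_of_le hlow
      (tendsto_const_nhds (x := (1/2:ℝ)) (f := atTop))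
    · intro m
      have h1 : (0:ℝ) < 2*(m:ℝ)+1 := by positivity
      have hmn : (0:ℝ) ≤ (m:ℝ) := Nat.cast_nonneg m
      rw [le_div_iff₀ h1]
      have hu : (1/((m:ℝ)+1)) * ((m:ℝ)+1) = 1 := by field_simp
      have hupos : 0 < 1/((m:ℝ)+1) := by positivity
      have hδ : (0:ℝ) < 1/(32*(m:ℝ)^2+48*(m:ℝ)+20) := by positivity
      unfold gfun
      nlinarith [hu, hupos, hδ, hmn]
    · intro m
      have h1 : (0:ℝ) < 2*(m:ℝ)+1 := by positivity
      have hmn : (0:ℝ) ≤ (m:ℝ) := Nat.cast_nonneg m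
      rw [div_le_iff₀ h1]
      have hδle : 1/(32*(m:ℝ)^2+48*(m:ℝ)+20) ≤ 1/4 := by
        apply one_div_le_one_div_of_le (by norm_num)
        nlinarith [hmn]
      unfold gfun
      nlinarith [hδle, hmn]
  have heq : ∀ m : ℕ, cw m ^2 * gfun m = (gfun m / (2*(m:ℝ)+1)) * (Real.Wallis.W m)⁻¹ := by
    intro m
    rw [cw_sq_eq]
    have hWp := Real.Wallis.W_pos m
    have h1 : (0:ℝ) < 2*(m:ℝ)+1 := by positivity
    field_simp
  have hmul := hg.mul hWinv
  have hhalf : (1/2 : ℝ) * (2/π) = 1/π := by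
    have hπ : (π:ℝ) ≠ 0 := pi_ne_zero
    field_simp
  rw [hhalf] at hmul
  exact Tendsto.congr (fun m => (heq m).symm) hmul

lemma master (m : ℕ) : cw m ^2 * gfun m < 1/π := by
  have h1 := a_strictmono m
  have h2 : cw (m+1) ^2 * gfun (m+1) ≤ 1/π := by
    have hmono : Monotone (fun m : ℕ => cw m ^2 * gfun m) :=
      monotone_nat_of_le_succ (fun k => le_of_lt (a_strictmono k))
    exact hmono.ge_of_tendsto a_tendsto (m+1)
  linarith

lemma sq_neg_one_pow (m : ℕ) : ((-1:ℝ)^m)^2 = 1 := by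
  rw [← pow_mul, mul_comm, pow_mul]
  norm_num

lemma key_bound (n : ℕ) (hn : 1 ≤ n) :
    (legendreP n).eval 0 ^2 + (derivative (legendreP n)).eval 0 ^2 / ((n:ℝ)^2 + n + 1/2)
      < 4 / (π * (2*(n:ℝ)+1)) := by
  have hπ := Real.pi_pos
  rcases Nat.even_or_odd n with ⟨m, hm⟩ | ⟨m, hm⟩
  · -- n = 2m
    subst hm
    rw [show m + m = 2*m from by omega] at *
    rw [eval0_even, deriv0_even]
    have hg := gfun_pos m
    have hmas := master m
    have hkey : cw m ^2 * ((m:ℝ) + 1/4) < 1/π := by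
      have hδ : (0:ℝ) < 1/(32*(m:ℝ)^2+48*(m:ℝ)+20) := by positivity
      have hcwp := cw_pos m
      unfold gfun at hmas
      nlinarith [hmas, mul_pos (pow_pos hcwp 2) hδ]
    rw [mul_pow, sq_neg_one_pow, one_mul]
    have h1 : (0:ℝ) < (m:ℝ) + 1/4 := by positivity
    have hc : (2*((2*m:ℕ):ℝ)+1) = 4*(m:ℝ)+1 := by push_cast; ring
    rw [hc]
    have h2 : (0:ℝ) < 4*(m:ℝ)+1 := by positivity
    have h0 : ((0:ℝ))^2 / ((((2*m:ℕ)):ℝ)^2 + ((2*m:ℕ):ℝ) + 1/2) = 0 := by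
      norm_num
    rw [h0, add_zero, lt_div_iff₀ (by positivity)]
    have h4 := mul_lt_mul_of_pos_right hkey hπ
    have h5 : (1/π)*π = 1 := one_div_mul_cancel (ne_of_gt hπ)
    nlinarith [h4, h5]
  · subst hm
    rw [eval0_odd, deriv0_odd]
    have hg := gfun_pos m
    have hmas := master m
    have hcq := cw_pos m
    rw [mul_pow, sq_neg_one_pow, one_mul, mul_pow]
    have hc : (((2*m+1:ℕ)):ℝ) = 2*(m:ℝ)+1 := by push_cast; ring
    rw [hc]
    have hD : ((2*(m:ℝ)+1)^2 + (2*(m:ℝ)+1) + 1/2) = 4*(m:ℝ)^2+6*(m:ℝ)+5/2 := by ring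
    rw [hD]
    have hDpos : (0:ℝ) < 4*(m:ℝ)^2+6*(m:ℝ)+5/2 := by positivity
    have hiden : 4 * gfun m * (4*(m:ℝ)^2+6*(m:ℝ)+5/2) = (2*(m:ℝ)+1)^2 * (4*(m:ℝ)+3) := by
      unfold gfun
      have h8 : (32*(m:ℝ)^2+48*(m:ℝ)+20) = 8 * (4*(m:ℝ)^2+6*(m:ℝ)+5/2) := by ring
      rw [h8]
      field_simp
      ring
    have hcwlt : cw m ^2 < 1/(π * gfun m) := by
      rw [lt_div_iff₀ (by positivity)]
      have h4 := mul_lt_mul_of_pos_right hmas hπ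
      have h5 : (1/π)*π = 1 := one_div_mul_cancel (ne_of_gt hπ)
      nlinarith [h4, h5]
    have h43 : (0:ℝ) < 4*(m:ℝ)+3 := by positivity
    have hstep : (2*(m:ℝ)+1)^2 * cw m^2 / (4*(m:ℝ)^2+6*(m:ℝ)+5/2) < 4/(π*(4*(m:ℝ)+3)) := by
      rw [div_lt_div_iff₀ (by positivity) (by positivity)]
      have hmul := mul_lt_mul_of_pos_left hcwlt
        (show (0:ℝ) < (2*(m:ℝ)+1)^2 * (π*(4*(m:ℝ)+3)) by positivity)
      calc (2*(m:ℝ)+1)^2 * cw m^2 * (π*(4*(m:ℝ)+3))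
          = (2*(m:ℝ)+1)^2 * (π*(4*(m:ℝ)+3)) * cw m ^2 := by ring
        _ < (2*(m:ℝ)+1)^2 * (π*(4*(m:ℝ)+3)) * (1/(π * gfun m)) := hmul
        _ = 4 * (4*(m:ℝ)^2+6*(m:ℝ)+5/2) := by
            rw [mul_one_div, div_eq_iff (by positivity)]
            linear_combination (-π) * hiden
    calc (0:ℝ)^2 + (2*(m:ℝ)+1)^2 * cw m^2 / (4*(m:ℝ)^2+6*(m:ℝ)+5/2)
        = (2*(m:ℝ)+1)^2 * cw m^2 / (4*(m:ℝ)^2+6*(m:ℝ)+5/2) := by ring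
      _ < 4/(π*(4*(m:ℝ)+3)) := hstep
      _ = 4/(π*(2*(2*(m:ℝ)+1)+1)) := by ring_nf

section analysis

variable (n : ℕ)

noncomputable def pf (x : ℝ) : ℝ := (legendreP n).eval x
noncomputable def qf (x : ℝ) : ℝ := (derivative (legendreP n)).eval x
noncomputable def rf (x : ℝ) : ℝ := (derivative (derivative (legendreP n))).eval x

noncomputable def lam : ℝ := (n:ℝ) * ((n:ℝ)+1)

lemma ode_eval (hn : 1 ≤ n) (x : ℝ) :
    (x^2-1) * rf n x + 2*(x * qf n x) = lam n * pf n x := by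
  have h := congrArg (fun P : ℝ[X] => P.eval x) (legendre_ode n hn)
  simpa [pf, qf, rf, lam, mul_assoc] using h

noncomputable def uf (θ : ℝ) : ℝ := Real.sqrt (Real.sin θ) * pf n (Real.cos θ)

noncomputable def vf (θ : ℝ) : ℝ :=
  Real.cos θ / (2 * Real.sqrt (Real.sin θ)) * pf n (Real.cos θ)
    - Real.sin θ * Real.sqrt (Real.sin θ) * qf n (Real.cos θ)

noncomputable def phif (θ : ℝ) : ℝ := lam n + 1/4 + 1/(4 * Real.sin θ^2)

noncomputable def Ff (θ : ℝ) : ℝ := uf n θ^2 + vf n θ^2 / phif n θ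

variable {θ : ℝ}

lemma phif_pos (hs : 0 < Real.sin θ) : 0 < phif n θ := by
  have h1 : (0:ℝ) ≤ lam n := by unfold lam; positivity
  unfold phif; positivity

lemma hasDerivAt_u (hs : 0 < Real.sin θ) : HasDerivAt (uf n) (vf n θ) θ := by
  have hsne : Real.sin θ ≠ 0 := ne_of_gt hs
  have h1 : HasDerivAt (fun θ => Real.sqrt (Real.sin θ))
      (1/(2*Real.sqrt (Real.sin θ)) * Real.cos θ) θ :=
    (Real.hasDerivAt_sqrt hsne).comp θ (Real.hasDerivAt_sin θ)
  have h2 : HasDerivAt (fun θ => pf n (Real.cos θ))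
      (qf n (Real.cos θ) * (-Real.sin θ)) θ :=
    ((legendreP n).hasDerivAt (Real.cos θ)).comp θ (Real.hasDerivAt_cos θ)
  have h := h1.mul h2
  refine h.congr_deriv (Eq.symm ?_)
  unfold vf
  have ht : Real.sqrt (Real.sin θ) ≠ 0 := by positivity
  field_simp
  ring_nf

lemma hasDerivAt_v (hn : 1 ≤ n) (hs : 0 < Real.sin θ) :
    HasDerivAt (vf n) (-(phif n θ) * uf n θ) θ := by
  have hsne : Real.sin θ ≠ 0 := ne_of_gt hs
  have ht : Real.sqrt (Real.sin θ) ≠ 0 := by positivity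
  have htpos : 0 < Real.sqrt (Real.sin θ) := Real.sqrt_pos.mpr hs
  have hsqrt : HasDerivAt (fun θ => Real.sqrt (Real.sin θ))
      (1/(2*Real.sqrt (Real.sin θ)) * Real.cos θ) θ :=
    (Real.hasDerivAt_sqrt hsne).comp θ (Real.hasDerivAt_sin θ)
  have hp : HasDerivAt (fun θ => pf n (Real.cos θ))
      (qf n (Real.cos θ) * (-Real.sin θ)) θ :=
    ((legendreP n).hasDerivAt (Real.cos θ)).comp θ (Real.hasDerivAt_cos θ)
  have hq : HasDerivAt (fun θ => qf n (Real.cos θ))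
      (rf n (Real.cos θ) * (-Real.sin θ)) θ :=
    ((derivative (legendreP n)).hasDerivAt (Real.cos θ)).comp θ (Real.hasDerivAt_cos θ)
  have hden : HasDerivAt (fun θ => 2 * Real.sqrt (Real.sin θ))
      (2 * (1/(2*Real.sqrt (Real.sin θ)) * Real.cos θ)) θ := hsqrt.const_mul 2
  have hdne : 2 * Real.sqrt (Real.sin θ) ≠ 0 := by positivity
  have hc1 : HasDerivAt (fun θ => Real.cos θ / (2 * Real.sqrt (Real.sin θ)))
      ((-Real.sin θ * (2 * Real.sqrt (Real.sin θ)) -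
        Real.cos θ * (2 * (1/(2*Real.sqrt (Real.sin θ)) * Real.cos θ))) /
        (2 * Real.sqrt (Real.sin θ))^2) θ :=
    (Real.hasDerivAt_cos θ).div hden hdne
  have hc2 : HasDerivAt (fun θ => Real.sin θ * Real.sqrt (Real.sin θ))
      (Real.cos θ * Real.sqrt (Real.sin θ) +
        Real.sin θ * (1/(2*Real.sqrt (Real.sin θ)) * Real.cos θ)) θ :=
    (Real.hasDerivAt_sin θ).mul hsqrt
  have h := (hc1.mul hp).sub (hc2.mul hq)
  refine h.congr_deriv (Eq.symm ?_)
  have hode := ode_eval n hn (Real.cos θ)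
  have hpyth : Real.cos θ^2 + Real.sin θ^2 = 1 := by
    rw [add_comm]; exact Real.sin_sq_add_cos_sq θ
  have hRs : Real.sin θ^2 * rf n (Real.cos θ)
      = 2*(Real.cos θ * qf n (Real.cos θ)) - lam n * pf n (Real.cos θ) := by
    linear_combination -hode + (rf n (Real.cos θ)) * hpyth
  have ht2 : Real.sqrt (Real.sin θ)^2 = Real.sin θ := Real.sq_sqrt (le_of_lt hs)
  unfold uf phif
  set t := Real.sqrt (Real.sin θ)
  rw [← ht2] at hRs ⊢
  have hpyth2 : Real.cos θ^2 + (t^2)^2 = 1 := by rw [ht2]; exact hpyth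
  field_simp
  linear_combination (-(16:ℝ)*t^4) * hRs + (4*pf n (Real.cos θ)) * hpyth2

lemma hasDerivAt_phi (hs : 0 < Real.sin θ) :
    HasDerivAt (phif n) (-Real.cos θ / (2 * Real.sin θ^3) * 1) θ := by
  have hsne : Real.sin θ ≠ 0 := ne_of_gt hs
  have hden : HasDerivAt (fun θ => 4 * Real.sin θ^2) (4 * (2 * Real.sin θ * Real.cos θ)) θ := by
    have h1 : HasDerivAt (fun θ => Real.sin θ^2) (2 * Real.sin θ^(2-1) * Real.cos θ) θ :=
      (Real.hasDerivAt_sin θ).pow 2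
    simpa using h1.const_mul 4
  have hd : HasDerivAt (fun θ => 1/(4 * Real.sin θ^2))
      ((0 * (4*Real.sin θ^2) - 1 * (4 * (2 * Real.sin θ * Real.cos θ)))/(4*Real.sin θ^2)^2) θ :=
    (hasDerivAt_const θ 1).div hden (by positivity)
  have h := hd.const_add (lam n + 1/4)
  have : HasDerivAt (phif n) ((0 * (4*Real.sin θ^2) - 1 * (4 * (2 * Real.sin θ * Real.cos θ)))/(4*Real.sin θ^2)^2) θ := by
    exact h
  convert this using 1
  field_simp
  ring

lemma hasDerivAt_F (hn : 1 ≤ n) (hs : 0 < Real.sin θ) :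
    HasDerivAt (Ff n) (vf n θ^2 * (Real.cos θ / (2 * Real.sin θ^3)) / phif n θ^2) θ := by
  have hu := hasDerivAt_u n hs
  have hv := hasDerivAt_v n hn hs
  have hphi := hasDerivAt_phi n hs
  have hphine : phif n θ ≠ 0 := ne_of_gt (phif_pos n hs)
  have husq : HasDerivAt (fun θ => uf n θ^2) (2 * uf n θ^(2-1) * vf n θ) θ := hu.pow 2
  have hvsq : HasDerivAt (fun θ => vf n θ^2) (2 * vf n θ^(2-1) * (-(phif n θ) * uf n θ)) θ :=
    hv.pow 2
  have hdiv : HasDerivAt (fun θ => vf n θ^2 / phif n θ)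
      ((2 * vf n θ^(2-1) * (-(phif n θ) * uf n θ) * phif n θ
        - vf n θ^2 * (-Real.cos θ / (2 * Real.sin θ^3) * 1)) / phif n θ^2) θ :=
    hvsq.div hphi hphine
  have h := husq.add hdiv
  have hFeq : Ff n = fun θ => uf n θ^2 + vf n θ^2 / phif n θ := rfl
  rw [hFeq]
  refine h.congr_deriv (Eq.symm ?_)
  have hsne : Real.sin θ ≠ 0 := ne_of_gt hs
  field_simp
  ring

lemma F_le (hn : 1 ≤ n) (hθ : θ ∈ Ioo 0 π) : Ff n θ ≤ Ff n (π/2) := by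
  have hπ := Real.pi_pos
  have hsinpos : ∀ x ∈ Ioo (0:ℝ) π, 0 < Real.sin x := fun x hx =>
    Real.sin_pos_of_pos_of_lt_pi hx.1 hx.2
  have hmono : MonotoneOn (Ff n) (Ioc 0 (π/2)) := by
    apply monotoneOn_of_deriv_nonneg (convex_Ioc 0 (π/2))
    · intro x hx
      have hxm : x ∈ Ioo (0:ℝ) π := ⟨hx.1, lt_of_le_of_lt hx.2 (by linarith)⟩
      exact (hasDerivAt_F n hn (hsinpos x hxm)).continuousAt.continuousWithinAt
    · rw [interior_Ioc]
      intro x hx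
      have hxm : x ∈ Ioo (0:ℝ) π := ⟨hx.1, lt_trans hx.2 (by linarith)⟩
      exact (hasDerivAt_F n hn (hsinpos x hxm)).differentiableAt.differentiableWithinAt
    · rw [interior_Ioc]
      intro x hx
      have hxm : x ∈ Ioo (0:ℝ) π := ⟨hx.1, lt_trans hx.2 (by linarith)⟩
      have hsp := hsinpos x hxm
      rw [(hasDerivAt_F n hn hsp).deriv]
      have hcos : 0 ≤ Real.cos x := Real.cos_nonneg_of_mem_Icc
        ⟨by linarith [hx.1], le_of_lt hx.2⟩
      have hφ := phif_pos n hsp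
      positivity
  have hanti : AntitoneOn (Ff n) (Ico (π/2) π) := by
    apply antitoneOn_of_deriv_nonpos (convex_Ico (π/2) π)
    · intro x hx
      have hxm : x ∈ Ioo (0:ℝ) π := ⟨lt_of_lt_of_le (by linarith) hx.1, hx.2⟩
      exact (hasDerivAt_F n hn (hsinpos x hxm)).continuousAt.continuousWithinAt
    · rw [interior_Ico]
      intro x hx
      have hxm : x ∈ Ioo (0:ℝ) π := ⟨lt_trans (by linarith) hx.1, hx.2⟩
      exact (hasDerivAt_F n hn (hsinpos x hxm)).differentiableAt.differentiableWithinAt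
    · rw [interior_Ico]
      intro x hx
      have hxm : x ∈ Ioo (0:ℝ) π := ⟨lt_trans (by linarith) hx.1, hx.2⟩
      have hsp := hsinpos x hxm
      rw [(hasDerivAt_F n hn hsp).deriv]
      have hcos : Real.cos x ≤ 0 := Real.cos_nonpos_of_pi_div_two_le_of_le
        (le_of_lt hx.1) (by linarith [hx.2])
      have hφ := phif_pos n hsp
      have hv2 : 0 ≤ vf n x^2 := sq_nonneg _
      have hs3 : 0 < 2 * Real.sin x^3 := by positivity
      have h1 : Real.cos x / (2 * Real.sin x^3) ≤ 0 := div_nonpos_of_nonpos_of_nonneg hcos (le_of_lt hs3)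
      have h2 : vf n x^2 * (Real.cos x / (2 * Real.sin x^3)) ≤ 0 := mul_nonpos_of_nonneg_of_nonpos hv2 h1
      exact div_nonpos_of_nonpos_of_nonneg h2 (le_of_lt (pow_pos hφ 2))
  rcases le_or_gt θ (π/2) with h | h
  · exact hmono ⟨hθ.1, h⟩ ⟨by linarith, le_refl _⟩ h
  · exact hanti ⟨le_refl _, by linarith⟩ ⟨le_of_lt h, hθ.2⟩ (le_of_lt h)

lemma F_pi2 : Ff n (π/2) = pf n 0^2 + qf n 0^2/((n:ℝ)^2+(n:ℝ)+1/2) := by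
  unfold Ff uf vf phif lam
  rw [Real.sin_pi_div_two, Real.cos_pi_div_two, Real.sqrt_one]
  norm_num
  ring_nf

lemma main_analytic (hn : 1 ≤ n) (hθ : θ ∈ Ioo 0 π) :
    Real.sin θ * pf n (Real.cos θ)^2 ≤ pf n 0^2 + qf n 0^2/((n:ℝ)^2+(n:ℝ)+1/2) := by
  have hsp : 0 < Real.sin θ := Real.sin_pos_of_pos_of_lt_pi hθ.1 hθ.2
  have h1 : Real.sin θ * pf n (Real.cos θ)^2 = uf n θ^2 := by
    unfold uf
    rw [mul_pow, Real.sq_sqrt (le_of_lt hsp)]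
  have h2 : uf n θ^2 ≤ Ff n θ := by
    unfold Ff
    have := div_nonneg (sq_nonneg (vf n θ)) (le_of_lt (phif_pos n hsp))
    linarith
  rw [h1, ← F_pi2]
  exact le_trans h2 (F_le n hn hθ)

end analysis


theorem bernstein_legendre (n : ℕ) (hn : 1 ≤ n) (x : ℝ) (hx : x ∈ Set.Ioo (-1 : ℝ) 1) :
    |legendreTilde n x| < Real.sqrt (2 / Real.pi) * (1 - x ^ 2) ^ (-(1 / 4 : ℝ)) := by
  have hπ := Real.pi_pos
  obtain ⟨hx1, hx2⟩ := hx
  have hA : (0:ℝ) < 1 - x^2 := by nlinarith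
  set θ := Real.arccos x with hθdef
  have hθmem : θ ∈ Set.Ioo (0:ℝ) π := by
    refine ⟨Real.arccos_pos.mpr hx2, ?_⟩
    rcases lt_or_eq_of_le (Real.arccos_le_pi x) with h | h
    · exact h
    · exact absurd (Real.arccos_eq_pi.mp h) (by linarith)
  have hcos : Real.cos θ = x := Real.cos_arccos (le_of_lt hx1) (le_of_lt hx2)
  have hsin : Real.sin θ = Real.sqrt (1 - x^2) := Real.sin_arccos x
  have hmain := main_analytic n hn hθmem
  rw [hcos, hsin] at hmain
  have hkey := key_bound n hn
  have hS : Real.sqrt (1-x^2) * pf n x ^2 < 4/(π*(2*(n:ℝ)+1)) := by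
    calc Real.sqrt (1-x^2) * pf n x ^2
        ≤ pf n 0^2 + qf n 0^2/((n:ℝ)^2+(n:ℝ)+1/2) := hmain
      _ < 4/(π*(2*(n:ℝ)+1)) := hkey
  set S := Real.sqrt (1-x^2) with hSdef
  have hSpos : 0 < S := Real.sqrt_pos.mpr hA
  have h2n1 : (0:ℝ) < 2*(n:ℝ)+1 := by positivity
  set B := Real.sqrt (2/π) * (1-x^2) ^ (-(1/4:ℝ)) with hB
  have hBpos : 0 < B := by
    have h1 : (0:ℝ) < Real.sqrt (2/π) := Real.sqrt_pos.mpr (by positivity)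
    have h2 : (0:ℝ) < (1-x^2) ^ (-(1/4:ℝ)) := Real.rpow_pos_of_pos hA _
    positivity
  have hT2 : |legendreTilde n x|^2 = ((2*(n:ℝ)+1)/2) * pf n x ^2 := by
    rw [sq_abs]
    unfold legendreTilde pf
    rw [mul_pow, Real.sq_sqrt (by positivity : (0:ℝ) ≤ (2*(n:ℝ)+1)/2)]
  have hB2 : B^2 = 2/(π*S) := by
    rw [hB, mul_pow, Real.sq_sqrt (by positivity : (0:ℝ) ≤ 2/π)]
    have : ((1-x^2) ^ (-(1/4:ℝ)))^2 = (1-x^2) ^ (-(1/2:ℝ)) := by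
      rw [sq, ← Real.rpow_add hA]
      norm_num
    rw [this, hSdef]
    rw [Real.rpow_neg (le_of_lt hA)]
    rw [show ((1/2:ℝ)) = (1/2:ℝ) from rfl]
    rw [show (1-x^2) ^ ((1/2:ℝ)) = Real.sqrt (1-x^2) from (Real.rpow_natCast _ _ ▸ (Real.sqrt_eq_rpow _).symm)]
    field_simp
  have hfinal : |legendreTilde n x|^2 < B^2 := by
    rw [hT2, hB2]
    have hS4 : S * pf n x^2 * (π*(2*(n:ℝ)+1)) < 4 := (lt_div_iff₀ (by positivity)).mp hS
    rw [lt_div_iff₀ (by positivity)]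
    nlinarith [hS4]
  calc |legendreTilde n x| < B := lt_of_pow_lt_pow_left₀ 2 (le_of_lt hBpos) hfinal
    _ = _ := rfl
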